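/- There exists a bottleneck non-crossing matching M of the points such that every diagonal {i,j} ∈ M satisfies τ(i,j) > π/2 for both orientations of the diagonal (i.e., both the turning angle of the arc ⟨i..j⟩ and of the arc ⟨j..i⟩ exceed π/2). -/

import Mathlib

noncomputable section

namespace BNC

/-- The Euclidean plane. -/
abbrev Pt : Type := EuclideanSpace ℝ (Fin 2)

/-- Planar cross product (determinant) of two vectors. -/
def cross (u w : Pt) : ℝ := u 0 * w 1 - u 1 * w 0

/-- `v` lists points in strictly convex position in counterclockwise order:
every point distinct from `v i` and `v (i+1)` lies strictly to the left of the
directed line from `v i` to `v (i+1)`.  (This also forces no three of the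
points to be collinear.) -/
def ConvexCCW {n : ℕ} (v : ZMod n → Pt) : Prop :=
  ∀ i j : ZMod n, j ≠ i → j ≠ i + 1 → 0 < cross (v (i + 1) - v i) (v j - v i)

/-- The cyclic arc of indices `i, i+1, …, j` (mod `n`). -/
def arc {n : ℕ} (i j : ZMod n) : Finset (ZMod n) :=
  Finset.image (fun t : ℕ => i + (t : ZMod n)) (Finset.range ((j - i).val + 1))

/-- The turning angle `τ(i,j)`: the sum over `k ∈ ⟨i+1..j−1⟩` of the unsigned
angle between `v (k+1) − v k` and `v k − v (k−1)`. -/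
def tau {n : ℕ} (v : ZMod n → Pt) (i j : ZMod n) : ℝ :=
  ∑ k ∈ arc (i + 1) (j - 1),
    InnerProductGeometry.angle (v (k + 1) - v k) (v k - v (k - 1))

/-- The length of the segment joining the two points of an unordered pair. -/
def pairDist {n : ℕ} (v : ZMod n → Pt) : Sym2 (ZMod n) → ℝ :=
  Sym2.lift ⟨fun a b => dist (v a) (v b), fun a b => dist_comm (v a) (v b)⟩

/-- The closed segment joining the two points of an unordered pair. -/
def pairSeg {n : ℕ} (v : ZMod n → Pt) : Sym2 (ZMod n) → Set Pt :=
  Sym2.lift ⟨fun a b => segment ℝ (v a) (v b), fun a b => segment_symm ℝ (v a) (v b)⟩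

/-- `M` is a perfect matching of the index set `A`: a set of non-degenerate
unordered pairs of indices from `A` such that every index of `A` belongs to
exactly one pair. -/
def IsMatchingOn {n : ℕ} (A : Set (ZMod n)) (M : Set (Sym2 (ZMod n))) : Prop :=
  (∀ e ∈ M, ¬ e.IsDiag) ∧ (∀ e ∈ M, ∀ k, k ∈ e → k ∈ A) ∧
    (∀ k ∈ A, ∃! e, e ∈ M ∧ k ∈ e)

/-- The closed segments of distinct pairs of `M` are pairwise disjoint. -/
def NonCrossing {n : ℕ} (v : ZMod n → Pt) (M : Set (Sym2 (ZMod n))) : Prop :=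
  ∀ e ∈ M, ∀ e' ∈ M, e ≠ e' → Disjoint (pairSeg v e) (pairSeg v e')

/-- The bottleneck value of a matching: the maximal segment length. -/
def bnM {n : ℕ} (v : ZMod n → Pt) (M : Set (Sym2 (ZMod n))) : ℝ :=
  sSup (pairDist v '' M)

/-- A non-crossing perfect matching of the whole point set. -/
def IsNCMatching {n : ℕ} (v : ZMod n → Pt) (M : Set (Sym2 (ZMod n))) : Prop :=
  IsMatchingOn Set.univ M ∧ NonCrossing v M

/-- A bottleneck matching: a non-crossing matching minimizing the bottleneck value. -/
def IsBottleneck {n : ℕ} (v : ZMod n → Pt) (M : Set (Sym2 (ZMod n))) : Prop :=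
  IsNCMatching v M ∧ ∀ M', IsNCMatching v M' → bnM v M ≤ bnM v M'

/-- A pair is an edge of the full polygon iff it is of the form `{k, k+1}`. -/
def IsPolyEdge {n : ℕ} (e : Sym2 (ZMod n)) : Prop := ∃ k : ZMod n, e = s(k, k + 1)

/-- The diagonals of a matching of the full point set. -/
def fullDiags {n : ℕ} (M : Set (Sym2 (ZMod n))) : Set (Sym2 (ZMod n)) :=
  {e ∈ M | ¬ IsPolyEdge e}

/-- The full polygon: the convex hull of all the points. -/
def fullPoly {n : ℕ} (v : ZMod n → Pt) : Set Pt := convexHull ℝ (Set.range v)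

/-- The interior of the polygon `Poly` minus the union of the segments of the
diagonals from `D`. -/
def regionSpace {n : ℕ} (v : ZMod n → Pt) (Poly : Set Pt) (D : Set (Sym2 (ZMod n))) :
    Set Pt :=
  interior Poly \ ⋃ e ∈ D, pairSeg v e

/-- `R` is a region: the closure of a connected component of the interior of the
polygon minus the union of the diagonal segments. -/
def IsRegion {n : ℕ} (v : ZMod n → Pt) (Poly : Set Pt) (D : Set (Sym2 (ZMod n)))
    (R : Set Pt) : Prop :=
  ∃ x ∈ regionSpace v Poly D, R = closure (connectedComponentIn (regionSpace v Poly D) x)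

/-- The diagonals from `D` whose segment lies on the boundary of `R`. -/
def boundDiags {n : ℕ} (v : ZMod n → Pt) (Poly : Set Pt) (D : Set (Sym2 (ZMod n)))
    (R : Set Pt) : Set (Sym2 (ZMod n)) :=
  {e ∈ D | pairSeg v e ⊆ frontier R}

/-- `R` is a region bounded by exactly `k` diagonals. -/
def KBounded {n : ℕ} (v : ZMod n → Pt) (Poly : Set Pt) (D : Set (Sym2 (ZMod n)))
    (R : Set Pt) (k : ℕ) : Prop :=
  IsRegion v Poly D R ∧ (boundDiags v Poly D R).ncard = k

/-- The graph whose vertices are the diagonals of `D`, two being adjacent iff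
some 2-bounded region has both on its boundary. -/
def cascadeGraph {n : ℕ} (v : ZMod n → Pt) (Poly : Set Pt) (D : Set (Sym2 (ZMod n))) :
    SimpleGraph D where
  Adj a b := a ≠ b ∧ ∃ R : Set Pt, KBounded v Poly D R 2 ∧
      pairSeg v a.1 ⊆ frontier R ∧ pairSeg v b.1 ⊆ frontier R
  symm := by
    refine ⟨?_⟩
    rintro a b ⟨hab, R, h1, h2, h3⟩
    exact ⟨hab.symm, R, h1, h3, h2⟩
  loopless := by exact ⟨by rintro a ⟨h, -⟩; exact h rfl⟩

/-- The number of cascades: the number of connected components of the cascade graph. -/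
def cascadeCount {n : ℕ} (v : ZMod n → Pt) (Poly : Set Pt) (D : Set (Sym2 (ZMod n))) : ℕ :=
  Nat.card (cascadeGraph v Poly D).ConnectedComponent

/-- A pair is a diagonal relative to the arc `⟨i..j⟩` iff it is neither `{i,j}`
nor of the form `{k, k+1}` with both `k` and `k+1` in the arc. -/
def ArcDiag {n : ℕ} (i j : ZMod n) (e : Sym2 (ZMod n)) : Prop :=
  e ≠ s(i, j) ∧ ∀ k : ZMod n, k ∈ arc i j → k + 1 ∈ arc i j → e ≠ s(k, k + 1)

/-- The convex hull of the points of the arc `⟨i..j⟩`. -/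
def arcPoly {n : ℕ} (v : ZMod n → Pt) (i j : ZMod n) : Set Pt :=
  convexHull ℝ (v '' (arc i j : Set (ZMod n)))

/-- The diagonals (relative to the arc `⟨i..j⟩`) of a matching `M`. -/
def arcDiags {n : ℕ} (i j : ZMod n) (M : Set (Sym2 (ZMod n))) : Set (Sym2 (ZMod n)) :=
  {e ∈ M | ArcDiag i j e}

/-- `M` is admissible for the subproblem `Matching(i,j)`: it is a non-crossing
perfect matching of the points of the arc `⟨i..j⟩`, it has at most one cascade,
and any region whose boundary contains the segment `[v i, v j]` has at most one
diagonal of `M` on its boundary. -/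
def Admissible {n : ℕ} (v : ZMod n → Pt) (i j : ZMod n) (M : Set (Sym2 (ZMod n))) : Prop :=
  IsMatchingOn (↑(arc i j)) M ∧ NonCrossing v M ∧
    cascadeCount v (arcPoly v i j) (arcDiags i j M) ≤ 1 ∧
    ∀ R : Set Pt, IsRegion v (arcPoly v i j) (arcDiags i j M) R →
      segment ℝ (v i) (v j) ⊆ frontier R →
      (boundDiags v (arcPoly v i j) (arcDiags i j M) R).ncard ≤ 1

/-- `S i j`: the optimal value of the subproblem `Matching(i,j)`. -/
def S {n : ℕ} (v : ZMod n → Pt) (i j : ZMod n) : ℝ :=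
  sInf (bnM v '' {M | Admissible v i j M})

/-- The pair `(i,j)` is necessary: every admissible matching attaining `S i j`
contains the pair `{i,j}`. -/
def Necessary {n : ℕ} (v : ZMod n → Pt) (i j : ZMod n) : Prop :=
  ∀ M : Set (Sym2 (ZMod n)), Admissible v i j M → bnM v M = S v i j → s(i, j) ∈ M

/-- The closed right side of the directed line from `v i` to `v j`. -/
def rightClosed {n : ℕ} (v : ZMod n → Pt) (i j : ZMod n) : Set Pt :=
  {P : Pt | cross (v j - v i) (P - v i) ≤ 0}

/-- The region `Π⁺(i,j)`. -/
def PiPlus {n : ℕ} (v : ZMod n → Pt) (i j : ZMod n) : Set Pt :=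
  {P ∈ rightClosed v i j |
    Real.pi / 3 ≤ EuclideanGeometry.angle (v i) P (v j) ∧ dist (v i) (v j) ≤ dist P (v i)}

/-- The region `Π⁻(i,j)`. -/
def PiMinus {n : ℕ} (v : ZMod n → Pt) (i j : ZMod n) : Set Pt :=
  {P ∈ rightClosed v i j |
    Real.pi / 3 ≤ EuclideanGeometry.angle (v i) P (v j) ∧ dist (v i) (v j) ≤ dist P (v j)}

/-- `(i,j)` is a feasible pair: the arc `⟨i..j⟩` has an even number of points. -/
def Feasible {n : ℕ} (i j : ZMod n) : Prop := Even (arc i j).card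

/-- `(i,j)` is a diagonal pair (not an edge, not degenerate). -/
def IsDiagPair {n : ℕ} (i j : ZMod n) : Prop := i ≠ j ∧ j ≠ i + 1 ∧ i ≠ j + 1

/-- `(i,j)` is a candidate diagonal: a feasible diagonal that is necessary and
whose turning angle is at most `2π/3`. -/
def Candidate {n : ℕ} (v : ZMod n → Pt) (i j : ZMod n) : Prop :=
  Feasible i j ∧ IsDiagPair i j ∧ Necessary v i j ∧ tau v i j ≤ 2 * Real.pi / 3

/-! ### Auxiliary geometric lemmas -/

lemma cross_self (u : Pt) : cross u u = 0 := by simp [cross]; ring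

/-- The affine side function of the directed line A→B. -/
def lineF (A B P : Pt) : ℝ := cross (B - A) (P - A)

lemma lineF_combo (A B P Q : Pt) (a b : ℝ) (hab : a + b = 1) :
    lineF A B (a • P + b • Q) = a * lineF A B P + b * lineF A B Q := by
  have hb : b = 1 - a := by linarith
  subst hb
  simp [lineF, cross, PiLp.sub_apply, PiLp.add_apply, PiLp.smul_apply, smul_eq_mul]
  ring

lemma lineF_self (A B : Pt) : lineF A B A = 0 := by simp [lineF, cross]
lemma lineF_target (A B : Pt) : lineF A B B = 0 := by simp [lineF, cross]; ring

lemma seg_le (A B P Q : Pt) (hP : lineF A B P ≤ 0) (hQ : lineF A B Q ≤ 0) :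
    ∀ z ∈ segment ℝ P Q, lineF A B z ≤ 0 := by
  rintro z ⟨a, b, ha, hb, hab, rfl⟩
  rw [lineF_combo A B P Q a b hab]
  nlinarith

lemma seg_pos (A B P Q : Pt) (hP : 0 < lineF A B P) (hQ : 0 < lineF A B Q) :
    ∀ z ∈ segment ℝ P Q, 0 < lineF A B z := by
  rintro z ⟨a, b, ha, hb, hab, rfl⟩
  rw [lineF_combo A B P Q a b hab]
  rcases eq_or_lt_of_le ha with h | h
  · nlinarith
  · nlinarith

lemma seg_disj (A B P Q R S : Pt) (hP : lineF A B P ≤ 0) (hQ : lineF A B Q ≤ 0)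
    (hR : 0 < lineF A B R) (hS : 0 < lineF A B S) :
    Disjoint (segment ℝ P Q) (segment ℝ R S) := by
  rw [Set.disjoint_left]
  intro z hz hz'
  have := seg_le A B P Q hP hQ z hz
  have := seg_pos A B R S hR hS z hz'
  linarith

private lemma inter_coord (a0 a1 b0 b1 c0 c1 d0 d1 : ℝ)
    (hKne : (d0-c0)*(a1-b1) - (d1-c1)*(a0-b0) ≠ 0) :
    (1 - ((d0-c0)*(a1-c1) - (d1-c1)*(a0-c0))/((d0-c0)*(a1-b1) - (d1-c1)*(a0-b0)))*a0
      + (((d0-c0)*(a1-c1) - (d1-c1)*(a0-c0))/((d0-c0)*(a1-b1) - (d1-c1)*(a0-b0)))*b0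
    = (1 - (-((b0-a0)*(c1-a1) - (b1-a1)*(c0-a0))/((d0-c0)*(a1-b1) - (d1-c1)*(a0-b0))))*c0
      + (-((b0-a0)*(c1-a1) - (b1-a1)*(c0-a0))/((d0-c0)*(a1-b1) - (d1-c1)*(a0-b0)))*d0
    ∧ (1 - ((d0-c0)*(a1-c1) - (d1-c1)*(a0-c0))/((d0-c0)*(a1-b1) - (d1-c1)*(a0-b0)))*a1
      + (((d0-c0)*(a1-c1) - (d1-c1)*(a0-c0))/((d0-c0)*(a1-b1) - (d1-c1)*(a0-b0)))*b1
    = (1 - (-((b0-a0)*(c1-a1) - (b1-a1)*(c0-a0))/((d0-c0)*(a1-b1) - (d1-c1)*(a0-b0))))*c1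
      + (-((b0-a0)*(c1-a1) - (b1-a1)*(c0-a0))/((d0-c0)*(a1-b1) - (d1-c1)*(a0-b0)))*d1 := by
  constructor <;> (field_simp; ring)

lemma seg_cross (A B C D : Pt) (hC : lineF A B C < 0) (hD : 0 < lineF A B D)
    (hA : 0 < lineF C D A) (hB : lineF C D B < 0) :
    ¬ Disjoint (segment ℝ A B) (segment ℝ C D) := by
  have hK1 : cross (D - C) (A - B) = lineF C D A - lineF C D B := by
    simp [lineF, cross]; ring
  have hK2 : cross (D - C) (A - B) = lineF A B D - lineF A B C := by
    simp [lineF, cross]; ring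
  have hK : 0 < cross (D - C) (A - B) := by rw [hK1]; linarith
  set K : ℝ := cross (D - C) (A - B) with hKdef
  have hKne : K ≠ 0 := ne_of_gt hK
  set s : ℝ := lineF C D A / K with hs
  set t : ℝ := -lineF A B C / K with ht
  have hs0 : 0 < s := div_pos hA hK
  have hs1 : s < 1 := by rw [hs, div_lt_one hK, hK1]; linarith
  have ht0 : 0 < t := div_pos (by linarith) hK
  have ht1 : t < 1 := by rw [ht, div_lt_one hK, hK2]; linarith
  have key : (1 - s) • A + s • B = (1 - t) • C + t • D := by
    have hKc : K = (D 0 - C 0)*(A 1 - B 1) - (D 1 - C 1)*(A 0 - B 0) := by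
      rw [hKdef]; simp [cross]
    have hnum1 : lineF C D A = (D 0 - C 0)*(A 1 - C 1) - (D 1 - C 1)*(A 0 - C 0) := by
      simp only [lineF, cross, PiLp.sub_apply]
    have hnum2 : lineF A B C = (B 0 - A 0)*(C 1 - A 1) - (B 1 - A 1)*(C 0 - A 0) := by
      simp only [lineF, cross, PiLp.sub_apply]
    have hsc : s = ((D 0 - C 0)*(A 1 - C 1) - (D 1 - C 1)*(A 0 - C 0)) /
        ((D 0 - C 0)*(A 1 - B 1) - (D 1 - C 1)*(A 0 - B 0)) := by
      rw [hs, hKc, hnum1]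
    have htc : t = -((B 0 - A 0)*(C 1 - A 1) - (B 1 - A 1)*(C 0 - A 0)) /
        ((D 0 - C 0)*(A 1 - B 1) - (D 1 - C 1)*(A 0 - B 0)) := by
      rw [ht, hKc, hnum2]
    have hKne' : (D 0 - C 0)*(A 1 - B 1) - (D 1 - C 1)*(A 0 - B 0) ≠ 0 := by
      rw [← hKc]; exact hKne
    obtain ⟨h0, h1⟩ := inter_coord (A 0) (A 1) (B 0) (B 1) (C 0) (C 1) (D 0) (D 1) hKne'
    ext i
    fin_cases i <;>
      simp only [PiLp.add_apply, PiLp.smul_apply, smul_eq_mul, hsc, htc]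
    · exact h0
    · exact h1
  rw [Set.not_disjoint_iff]
  refine ⟨(1 - s) • A + s • B, ⟨1 - s, s, by linarith, le_of_lt hs0, by ring, rfl⟩, ?_⟩
  rw [key]
  exact ⟨1 - t, t, by linarith, le_of_lt ht0, by ring, rfl⟩

private lemma ratio_trans {am bm au bu aw bw : ℝ} (ham : 0 < am) (hbm : 0 < bm)
    (hbu : 0 ≤ bu) (haw : 0 ≤ aw)
    (h1 : 0 < bm*au - bu*am) (h2 : 0 < bw*am - bm*aw) : 0 < bw*au - bu*aw := by
  have hbw : 0 < bw := by nlinarith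
  have hau : 0 < au := by nlinarith
  have e1 : bm*au*bw > bu*am*bw := by nlinarith
  have e2 : bu*bw*am ≥ bu*bm*aw := by nlinarith
  nlinarith

lemma cross_trans {e f u m w : Pt} (hef : 0 < cross e f) (hem : 0 < cross e m)
    (hmf : 0 < cross m f) (heu : 0 ≤ cross e u) (huf : 0 ≤ cross u f)
    (hew : 0 ≤ cross e w) (hwf : 0 ≤ cross w f)
    (hum : 0 < cross u m) (hmw : 0 < cross m w) : 0 < cross u w := by
  have p1 : cross e f * cross u m = cross e m * cross u f - cross e u * cross m f := by
    simp [cross]; ring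
  have p2 : cross e f * cross m w = cross e w * cross m f - cross e m * cross w f := by
    simp [cross]; ring
  have p3 : cross e f * cross u w = cross e w * cross u f - cross e u * cross w f := by
    simp [cross]; ring
  have h1 : 0 < cross e m * cross u f - cross e u * cross m f := by
    rw [← p1]; exact mul_pos hef hum
  have h2 : 0 < cross e w * cross m f - cross e m * cross w f := by
    rw [← p2]; exact mul_pos hef hmw
  have h3 := ratio_trans hmf hem heu hwf h1 h2
  nlinarith [p3, h3, hef]

section Convex

variable {n : ℕ} [NeZero n]

lemma zmod_cast_inj {k l : ℕ} (hk : k < n) (hl : l < n) (h : (k : ZMod n) = l) : k = l := by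
  have := congrArg ZMod.val h
  rwa [ZMod.val_natCast_of_lt hk, ZMod.val_natCast_of_lt hl] at this

lemma zmod_add_ne (a : ZMod n) {k l : ℕ} (hk : k < n) (hl : l < n) (hkl : k ≠ l) :
    a + (k : ZMod n) ≠ a + (l : ZMod n) := by
  intro h
  exact hkl (zmod_cast_inj hk hl (by exact add_left_cancel h))

lemma zmod_add_ne_self (a : ZMod n) {k : ℕ} (hk1 : 1 ≤ k) (hk : k < n) :
    a + (k : ZMod n) ≠ a := by
  have h0 : (0:ℕ) < n := Nat.pos_of_ne_zero (NeZero.ne n)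
  have := zmod_add_ne a hk h0 (by omega)
  simpa using this

lemma zmod_cast_nsub_one_add_one (hn : 1 ≤ n) : ((n - 1 : ℕ) : ZMod n) + 1 = 0 := by
  have h : (((n - 1 : ℕ) + 1 : ℕ) : ZMod n) = ((n : ℕ) : ZMod n) := by
    congr 1; omega
  push_cast at h
  rw [h]
  exact ZMod.natCast_self n

/-- The fundamental chord lemma: for indices in counterclockwise arc order
`a, a+s, a+t` (with `0 < s < t ≤ n-1`), the triple is positively oriented. -/
lemma chord (hn : 4 ≤ n) (v : ZMod n → Pt) (hv : ConvexCCW v) (a : ZMod n) :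
    ∀ {s t : ℕ}, 1 ≤ s → s < t → t ≤ n - 1 →
    0 < cross (v (a + (s : ZMod n)) - v a) (v (a + (t : ZMod n)) - v a) := by
  set x : ℕ → Pt := fun k => v (a + (k : ZMod n)) - v a with hx
  have h1 : ∀ k : ℕ, 1 ≤ k → k + 1 ≤ n - 1 → 0 < cross (x k) (x (k+1)) := by
    intro k hk1 hk2
    have hne1 : a ≠ a + (k : ZMod n) := (zmod_add_ne_self a hk1 (by omega)).symm
    have hne2 : a ≠ a + (k : ZMod n) + 1 := by
      have : a + (k : ZMod n) + 1 = a + ((k+1 : ℕ) : ZMod n) := by push_cast; ring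
      rw [this]
      exact (zmod_add_ne_self a (by omega) (by omega)).symm
    have h := hv (a + (k : ZMod n)) a hne1 hne2
    have heq : cross (v (a + (k:ZMod n) + 1) - v (a + (k:ZMod n))) (v a - v (a + (k:ZMod n)))
        = cross (x k) (x (k+1)) := by
      have hidx : a + (k : ZMod n) + 1 = a + ((k+1 : ℕ) : ZMod n) := by push_cast; ring
      rw [hidx]
      simp only [hx, cross, PiLp.sub_apply]
      ring
    rwa [heq] at h
  have h2 : ∀ k : ℕ, 2 ≤ k → k ≤ n - 1 → 0 < cross (x 1) (x k) := by
    intro k hk1 hk2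
    have hne1 : a + (k : ZMod n) ≠ a := zmod_add_ne_self a (by omega) (by omega)
    have hne2 : a + (k : ZMod n) ≠ a + 1 := by
      have h1' : (a : ZMod n) + 1 = a + ((1:ℕ) : ZMod n) := by push_cast; ring
      rw [h1']
      exact zmod_add_ne a (by omega) (by omega) (by omega)
    have h := hv a (a + (k : ZMod n)) hne1 hne2
    have heq : cross (v (a + 1) - v a) (v (a + (k:ZMod n)) - v a) = cross (x 1) (x k) := by
      have h1' : (a : ZMod n) + 1 = a + ((1:ℕ) : ZMod n) := by push_cast; ring
      rw [h1']
    rwa [heq] at h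
  have h3 : ∀ k : ℕ, 1 ≤ k → k ≤ n - 2 → 0 < cross (x k) (x (n-1)) := by
    intro k hk1 hk2
    have hidx : a + ((n-1 : ℕ) : ZMod n) + 1 = a := by
      rw [add_assoc, zmod_cast_nsub_one_add_one (by omega), add_zero]
    have hne1 : a + (k : ZMod n) ≠ a + ((n-1:ℕ) : ZMod n) :=
      zmod_add_ne a (by omega) (by omega) (by omega)
    have hne2 : a + (k : ZMod n) ≠ a + ((n-1:ℕ) : ZMod n) + 1 := by
      rw [hidx]
      exact zmod_add_ne_self a hk1 (by omega)
    have h := hv (a + ((n-1:ℕ) : ZMod n)) (a + (k : ZMod n)) hne1 hne2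
    rw [hidx] at h
    have heq : cross (v a - v (a + ((n-1:ℕ):ZMod n))) (v (a + (k:ZMod n)) - v (a + ((n-1:ℕ):ZMod n)))
        = cross (x k) (x (n-1)) := by
      simp only [hx, cross, PiLp.sub_apply]
      ring
    rwa [heq] at h
  intro s t hs hst htn
  have main : ∀ t : ℕ, s + 1 ≤ t → t ≤ n - 1 → 0 < cross (x s) (x t) := by
    intro t ht
    induction t, ht using Nat.le_induction with
    | base => intro hb; exact h1 s hs hb
    | succ t ht ih =>
      intro htn1
      have htn2 : t ≤ n - 2 := by omega
      have hef : 0 < cross (x 1) (x (n-1)) := h2 (n-1) (by omega) (by omega)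
      have hem : 0 < cross (x 1) (x t) := h2 t (by omega) (by omega)
      have hmf : 0 < cross (x t) (x (n-1)) := h3 t (by omega) htn2
      have heu : 0 ≤ cross (x 1) (x s) := by
        rcases eq_or_lt_of_le hs with h | h
        · rw [← h]; rw [cross_self]
        · exact (h2 s (by omega) (by omega)).le
      have huf : 0 ≤ cross (x s) (x (n-1)) := (h3 s hs (by omega)).le
      have hew : 0 ≤ cross (x 1) (x (t+1)) := (h2 (t+1) (by omega) (by omega)).le
      have hwf : 0 ≤ cross (x (t+1)) (x (n-1)) := by
        rcases eq_or_lt_of_le htn1 with h | h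
        · rw [h]; rw [cross_self]
        · exact (h3 (t+1) (by omega) (by omega)).le
      have hum : 0 < cross (x s) (x t) := ih (by omega)
      have hmw : 0 < cross (x t) (x (t+1)) := h1 t (by omega) (by omega)
      exact cross_trans hef hem hmf heu huf hew hwf hum hmw
  exact main t (by omega) htn

end Convex

/-! ### Triangle inequality for the unoriented angle -/

section AngleTriangle

open InnerProductGeometry Real
open scoped RealInnerProductSpace

variable {V : Type*} [NormedAddCommGroup V] [InnerProductSpace ℝ V]

private lemma angle_triangle_unit {u q w : V} (hu : ‖u‖ = 1) (hq : ‖q‖ = 1) (hw : ‖w‖ = 1) :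
    angle u w ≤ angle u q + angle q w := by
  set s : ℝ := (inner ℝ u q : ℝ) with hsdef
  set t : ℝ := (inner ℝ q w : ℝ) with htdef
  set r : ℝ := (inner ℝ u w : ℝ) with hrdef
  have hqq : (inner ℝ q q : ℝ) = 1 := by rw [real_inner_self_eq_norm_mul_norm, hq]; ring
  have huu : (inner ℝ u u : ℝ) = 1 := by rw [real_inner_self_eq_norm_mul_norm, hu]; ring
  have hww : (inner ℝ w w : ℝ) = 1 := by rw [real_inner_self_eq_norm_mul_norm, hw]; ring
  rcases le_or_gt π (angle u q + angle q w) with h | h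
  · exact le_trans (angle_le_pi u w) h
  have ha0 := angle_nonneg u q
  have hb0 := angle_nonneg q w
  have hc0 := angle_nonneg u w
  have hcpi := angle_le_pi u w
  -- cosines and sines
  have hcos1 : Real.cos (angle u q) = s := by
    rw [cos_angle, hu, hq]; simp [hsdef]
  have hcos2 : Real.cos (angle q w) = t := by
    rw [cos_angle, hq, hw]; simp [htdef]
  have hcos3 : Real.cos (angle u w) = r := by
    rw [cos_angle, hu, hw]; simp [hrdef]
  have hsin1 : Real.sin (angle u q) = Real.sqrt (1 - s * s) := by
    have := sin_angle_mul_norm_mul_norm u q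
    rw [hu, hq, huu, hqq] at this
    simpa using this
  have hsin2 : Real.sin (angle q w) = Real.sqrt (1 - t * t) := by
    have := sin_angle_mul_norm_mul_norm q w
    rw [hq, hw, hqq, hww] at this
    simpa using this
  -- the key inequality
  have key : s * t - Real.sqrt (1 - s * s) * Real.sqrt (1 - t * t) ≤ r := by
    set u' : V := u - s • q with hu'
    set w' : V := w - t • q with hw'
    have hs' : (inner ℝ q u : ℝ) = s := by rw [hsdef]; exact (real_inner_comm q u).symm
    have ht' : (inner ℝ w q : ℝ) = t := by rw [htdef]; exact (real_inner_comm w q).symm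
    have h1 : (inner ℝ u' w' : ℝ) = r - s * t := by
      rw [hu', hw']
      simp only [inner_sub_left, inner_sub_right, real_inner_smul_left,
        real_inner_smul_right, hqq, ← hsdef, ← htdef, ← hrdef]
      ring
    have h2 : (inner ℝ u' u' : ℝ) = 1 - s * s := by
      rw [hu']
      simp only [inner_sub_left, inner_sub_right, real_inner_smul_left,
        real_inner_smul_right, huu, hqq, hs', ← hsdef]
      ring
    have h3 : (inner ℝ w' w' : ℝ) = 1 - t * t := by
      rw [hw']
      simp only [inner_sub_left, inner_sub_right, real_inner_smul_left,
        real_inner_smul_right, hww, hqq, ht', ← htdef]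
      ring
    have hn1 : ‖u'‖ = Real.sqrt (1 - s * s) := by
      rw [norm_eq_sqrt_real_inner, h2]
    have hn2 : ‖w'‖ = Real.sqrt (1 - t * t) := by
      rw [norm_eq_sqrt_real_inner, h3]
    have hcs := abs_real_inner_le_norm u' w'
    rw [h1, hn1, hn2] at hcs
    have := abs_le.mp hcs
    linarith [this.1]
  -- conclude via monotonicity of cos
  have hab0 : 0 ≤ angle u q + angle q w := by linarith
  have hcoscos : Real.cos (angle u q + angle q w) ≤ Real.cos (angle u w) := by
    rw [Real.cos_add, hcos1, hcos2, hcos3, hsin1, hsin2]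
    exact key
  by_contra hlt
  push_neg at hlt
  have := Real.strictAntiOn_cos ⟨hab0, h.le⟩ ⟨hc0, hcpi⟩ hlt
  linarith

lemma angle_triangle (x y z : V) : angle x z ≤ angle x y + angle y z := by
  by_cases hx : x = 0
  · subst hx
    rw [angle_zero_left, angle_zero_left]
    linarith [angle_nonneg y z]
  by_cases hz : z = 0
  · subst hz
    rw [angle_zero_right, angle_zero_right]
    linarith [angle_nonneg x y]
  by_cases hy : y = 0
  · subst hy
    rw [angle_zero_right, angle_zero_left]
    linarith [angle_le_pi x z]
  have hx' : (0:ℝ) < ‖x‖⁻¹ := inv_pos.mpr (norm_pos_iff.mpr hx)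
  have hy' : (0:ℝ) < ‖y‖⁻¹ := inv_pos.mpr (norm_pos_iff.mpr hy)
  have hz' : (0:ℝ) < ‖z‖⁻¹ := inv_pos.mpr (norm_pos_iff.mpr hz)
  have e1 : angle x z = angle (‖x‖⁻¹ • x) (‖z‖⁻¹ • z) := by
    rw [angle_smul_left_of_pos _ _ hx', angle_smul_right_of_pos _ _ hz']
  have e2 : angle x y = angle (‖x‖⁻¹ • x) (‖y‖⁻¹ • y) := by
    rw [angle_smul_left_of_pos _ _ hx', angle_smul_right_of_pos _ _ hy']
  have e3 : angle y z = angle (‖y‖⁻¹ • y) (‖z‖⁻¹ • z) := by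
    rw [angle_smul_left_of_pos _ _ hy', angle_smul_right_of_pos _ _ hz']
  rw [e1, e2, e3]
  exact angle_triangle_unit (norm_smul_inv_norm (𝕜 := ℝ) hx)
    (norm_smul_inv_norm (𝕜 := ℝ) hy) (norm_smul_inv_norm (𝕜 := ℝ) hz)

lemma inner_nonneg_of_angle_le_pi_div_two {x y : V} (h : angle x y ≤ π / 2) :
    0 ≤ (inner ℝ x y : ℝ) := by
  by_cases hx : x = 0
  · simp [hx]
  by_cases hy : y = 0
  · simp [hy]
  rw [InnerProductGeometry.angle, Real.arccos_le_pi_div_two] at h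
  have hpos : (0:ℝ) < ‖x‖ * ‖y‖ :=
    mul_pos (norm_pos_iff.mpr hx) (norm_pos_iff.mpr hy)
  by_contra hneg
  push_neg at hneg
  have := div_neg_of_neg_of_pos hneg hpos
  linarith

end AngleTriangle

/-! ### Matching machinery -/

section Machinery

variable {n : ℕ} [NeZero n] {v : ZMod n → Pt}

lemma pairSeg_mk (v : ZMod n → Pt) (a b : ZMod n) :
    pairSeg v s(a, b) = segment ℝ (v a) (v b) := rfl

lemma pairDist_mk (v : ZMod n → Pt) (a b : ZMod n) :
    pairDist v s(a, b) = dist (v a) (v b) := rfl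

lemma edge_pos (hv : ConvexCCW v) {k j : ZMod n} (h1 : j ≠ k) (h2 : j ≠ k + 1) :
    0 < lineF (v k) (v (k + 1)) (v j) := hv k j h1 h2

lemma sideR (hn : 4 ≤ n) (hv : ConvexCCW v) (a : ZMod n) {s t : ℕ}
    (h1 : 1 ≤ s) (h2 : s < t) (h3 : t ≤ n - 1) :
    lineF (v a) (v (a + (t : ZMod n))) (v (a + (s : ZMod n))) < 0 := by
  have h := chord hn v hv a h1 h2 h3
  have he : lineF (v a) (v (a + (t:ZMod n))) (v (a + (s:ZMod n)))
      = - cross (v (a + (s:ZMod n)) - v a) (v (a + (t:ZMod n)) - v a) := by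
    simp only [lineF, cross, PiLp.sub_apply]; ring
  rw [he]; linarith

lemma sideL (hn : 4 ≤ n) (hv : ConvexCCW v) (a : ZMod n) {s t : ℕ}
    (h1 : 1 ≤ t) (h2 : t < s) (h3 : s ≤ n - 1) :
    0 < lineF (v a) (v (a + (t : ZMod n))) (v (a + (s : ZMod n))) :=
  chord hn v hv a h1 h2 h3

lemma add_off (i k : ZMod n) : i + (((k - i).val : ℕ) : ZMod n) = k := by
  have h : (((k - i).val : ℕ) : ZMod n) = k - i := ZMod.natCast_rightInverse (k - i)
  rw [h]; ring

lemma off_add (i : ZMod n) {u : ℕ} (hu : u < n) : ((i + (u : ZMod n)) - i).val = u := by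
  have h : i + (u : ZMod n) - i = (u : ZMod n) := by ring
  rw [h, ZMod.val_natCast_of_lt hu]

/-- The matching of an arc by consecutive pairs. -/
def consecPairs (i : ZMod n) (m : ℕ) : Set (Sym2 (ZMod n)) :=
  {e | ∃ t : ℕ, 2*t + 1 ≤ m ∧ e = s(i + ((2*t : ℕ) : ZMod n), i + ((2*t+1 : ℕ) : ZMod n))}

lemma consec_notdiag {i : ZMod n} {m : ℕ} (hm : m ≤ n - 1) :
    ∀ e ∈ consecPairs i m, ¬ e.IsDiag := by
  have hn1 : 1 ≤ n := Nat.pos_of_ne_zero (NeZero.ne n)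
  rintro e ⟨t, ht, rfl⟩
  rw [Sym2.mk_isDiag_iff]
  exact zmod_add_ne i (by omega) (by omega) (by omega)

lemma consec_mem_off {i : ZMod n} {m : ℕ} (hm : m ≤ n - 1) :
    ∀ e ∈ consecPairs i m, ∀ k ∈ e, (k - i).val ≤ m := by
  have hn1 : 1 ≤ n := Nat.pos_of_ne_zero (NeZero.ne n)
  rintro e ⟨t, ht, rfl⟩ k hk
  rw [Sym2.mem_iff] at hk
  rcases hk with rfl | rfl
  · rw [off_add i (by omega)]; omega
  · rw [off_add i (by omega)]; omega

lemma consec_cover {i : ZMod n} {m : ℕ} (hm : m ≤ n - 1) (hodd : m % 2 = 1)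
    {k : ZMod n} (hk : (k - i).val ≤ m) :
    ∃! e, e ∈ consecPairs i m ∧ k ∈ e := by
  have hn1 : 1 ≤ n := Nat.pos_of_ne_zero (NeZero.ne n)
  set u : ℕ := (k - i).val with hu
  set t : ℕ := u / 2 with htdef
  have htm : 2*t + 1 ≤ m := by omega
  have hku : k = i + (u : ZMod n) := (add_off i k).symm
  refine ⟨s(i + ((2*t : ℕ) : ZMod n), i + ((2*t+1 : ℕ) : ZMod n)), ⟨⟨t, htm, rfl⟩, ?_⟩, ?_⟩
  · rw [Sym2.mem_iff]
    rcases Nat.even_or_odd u with he | ho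
    · left
      obtain ⟨w, hw⟩ := he
      have hc : (u : ZMod n) = ((2*t : ℕ) : ZMod n) := by congr 1; omega
      rw [hku, hc]
    · right
      obtain ⟨w, hw⟩ := ho
      have hc : (u : ZMod n) = ((2*t+1 : ℕ) : ZMod n) := by congr 1; omega
      rw [hku, hc]
  · rintro e' ⟨⟨r, hr, rfl⟩, hk'⟩
    rw [Sym2.mem_iff] at hk'
    have hru : r = t := by
      rcases hk' with h | h
      · have h2 : i + (u : ZMod n) = i + ((2*r : ℕ) : ZMod n) := by rw [← hku]; exact h
        have := zmod_cast_inj (show u < n by omega) (show 2*r < n by omega)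
          (add_left_cancel h2)
        omega
      · have h2 : i + (u : ZMod n) = i + ((2*r+1 : ℕ) : ZMod n) := by rw [← hku]; exact h
        have := zmod_cast_inj (show u < n by omega) (show 2*r+1 < n by omega)
          (add_left_cancel h2)
        omega
    rw [hru]

lemma consec_disj (hn : 4 ≤ n) (hv : ConvexCCW v) {i : ZMod n} {m : ℕ} (hm : m ≤ n - 1) :
    ∀ e ∈ consecPairs i m, ∀ e' ∈ consecPairs i m, e ≠ e' →
      Disjoint (pairSeg v e) (pairSeg v e') := by
  have hn1 : 1 ≤ n := by omega
  rintro e ⟨t, ht, rfl⟩ e' ⟨r, hr, rfl⟩ hne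
  have hrt : r ≠ t := by rintro rfl; exact hne rfl
  set k : ZMod n := i + ((2*t : ℕ) : ZMod n) with hk
  have hk1 : i + ((2*t+1 : ℕ) : ZMod n) = k + 1 := by rw [hk]; push_cast; ring
  have ha' : ∀ w : ℕ, w ≤ m → w ≠ 2*t → w ≠ 2*t+1 → 0 < lineF (v k) (v (k+1)) (v (i + (w : ZMod n))) := by
    intro w hw hw1 hw2
    refine edge_pos hv ?_ ?_
    · rw [hk]; exact zmod_add_ne i (by omega) (by omega) hw1
    · rw [← hk1]; exact zmod_add_ne i (by omega) (by omega) hw2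
  rw [pairSeg_mk, pairSeg_mk, hk1]
  refine seg_disj (v k) (v (k+1)) _ _ _ _ ?_ ?_ ?_ ?_
  · exact le_of_eq (lineF_self _ _)
  · exact le_of_eq (lineF_target _ _)
  · exact ha' (2*r) (by omega) (by omega) (by omega)
  · exact ha' (2*r+1) (by omega) (by omega) (by omega)

/-- Two-element Finset of an unordered pair. -/
def pairFS : Sym2 (ZMod n) → Finset (ZMod n) :=
  Sym2.lift ⟨fun a b => {a, b}, fun a b => Finset.pair_comm a b⟩

lemma mem_pairFS {k : ZMod n} {e : Sym2 (ZMod n)} : k ∈ pairFS e ↔ k ∈ e := by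
  induction e using Sym2.ind with
  | _ a b => simp [pairFS, Sym2.mem_iff]

lemma card_pairFS {e : Sym2 (ZMod n)} (he : ¬ e.IsDiag) : (pairFS e).card = 2 := by
  induction e using Sym2.ind with
  | _ a b =>
    rw [Sym2.mk_isDiag_iff] at he
    simp [pairFS, Finset.card_insert_of_notMem, he]

lemma even_of_partition {A : Finset (ZMod n)} {P : Set (Sym2 (ZMod n))}
    (hnd : ∀ e ∈ P, ¬ e.IsDiag) (hmem : ∀ e ∈ P, ∀ k ∈ e, k ∈ A)
    (hcov : ∀ k ∈ A, ∃! e, e ∈ P ∧ k ∈ e) : Even A.card := by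
  classical
  have hPfin : P.Finite := Set.toFinite P
  set F : Finset (Sym2 (ZMod n)) := hPfin.toFinset with hF
  have hmemF : ∀ e, e ∈ F ↔ e ∈ P := by
    intro e; rw [hF, Set.Finite.mem_toFinset]
  have hA : A = F.biUnion pairFS := by
    ext k
    simp only [Finset.mem_biUnion]
    constructor
    · intro hk
      obtain ⟨e, ⟨heP, hke⟩, -⟩ := hcov k hk
      exact ⟨e, (hmemF e).mpr heP, mem_pairFS.mpr hke⟩
    · rintro ⟨e, heF, hke⟩
      exact hmem e ((hmemF e).mp heF) k (mem_pairFS.mp hke)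
  have hdisj : ∀ e ∈ F, ∀ e' ∈ F, e ≠ e' → Disjoint (pairFS e) (pairFS e') := by
    intro e he e' he' hne
    rw [Finset.disjoint_left]
    intro k hk hk'
    have hke := mem_pairFS.mp hk
    have hke' := mem_pairFS.mp hk'
    have hkA : k ∈ A := hmem e ((hmemF e).mp he) k hke
    obtain ⟨e₀, -, huniq⟩ := hcov k hkA
    exact hne ((huniq e ⟨(hmemF e).mp he, hke⟩).trans (huniq e' ⟨(hmemF e').mp he', hke'⟩).symm)
  rw [hA, Finset.card_biUnion hdisj]
  have : ∀ e ∈ F, (pairFS e).card = 2 := fun e he => card_pairFS (hnd e ((hmemF e).mp he))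
  rw [Finset.sum_congr rfl this]
  simp [Finset.sum_const, mul_comm]

lemma bnM_ge {M : Set (Sym2 (ZMod n))} {e : Sym2 (ZMod n)} (he : e ∈ M) :
    pairDist v e ≤ bnM v M :=
  le_csSup (Set.Finite.bddAbove ((Set.toFinite M).image _)) ⟨e, he, rfl⟩

lemma bnM_le {M : Set (Sym2 (ZMod n))} {c : ℝ} (hc : 0 ≤ c)
    (h : ∀ e ∈ M, pairDist v e ≤ c) : bnM v M ≤ c :=
  Real.sSup_le (by rintro x ⟨e, he, rfl⟩; exact h e he) hc

end Machinery

/-! ### The key surgery lemma -/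

section Key

open InnerProductGeometry

variable {n : ℕ} [NeZero n]

lemma key_lemma (hn : 4 ≤ n) (v : ZMod n → Pt) (hv : ConvexCCW v)
    {M : Set (Sym2 (ZMod n))} (hM : IsNCMatching v M)
    (hminb : ∀ M', IsNCMatching v M' → bnM v M ≤ bnM v M')
    (hmind : ∀ M', IsBottleneck v M' → (fullDiags M).ncard ≤ (fullDiags M').ncard)
    {i j : ZMod n} (hij : s(i, j) ∈ M) (hdg : ¬ IsPolyEdge s(i, j)) :
    Real.pi / 2 < tau v i j := by
  by_contra htau
  push_neg at htau
  obtain ⟨⟨hnd, -, hcov⟩, hNC⟩ := hM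
  have hij_ne : i ≠ j := by
    intro h; exact hnd s(i,j) hij (by rw [Sym2.mk_isDiag_iff]; exact h)
  have hji1 : j ≠ i + 1 := fun h => hdg ⟨i, by rw [h]⟩
  have hij1 : i ≠ j + 1 := fun h => hdg ⟨j, by rw [Sym2.eq_swap, h]⟩
  set m : ℕ := (j - i).val with hmdef
  have hmlt : m < n := ZMod.val_lt _
  have hcast_m : i + (m : ZMod n) = j := add_off i j
  have hm0 : m ≠ 0 := by
    intro h
    have hq : j = i := by rw [← hcast_m, h]; simp
    exact hij_ne hq.symm
  have hm1 : m ≠ 1 := by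
    intro h
    exact hji1 (by rw [← hcast_m, h]; norm_num)
  have hmn1 : m ≠ n - 1 := by
    intro h
    apply hij1
    have h1 : j = i + ((n-1 : ℕ) : ZMod n) := by rw [← hcast_m, h]
    have : j + 1 = i := by
      rw [h1, add_assoc, zmod_cast_nsub_one_add_one (by omega), add_zero]
    exact this.symm
  have hm2 : 2 ≤ m := by omega
  have hmn2 : m ≤ n - 2 := by omega
  -- uniqueness of partners of i and j
  have hiuniq : ∀ e ∈ M, i ∈ e → e = s(i,j) := by
    intro e he hie
    obtain ⟨e₀, -, hu⟩ := hcov i (Set.mem_univ i)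
    exact (hu e ⟨he, hie⟩).trans (hu s(i,j) ⟨hij, Sym2.mem_iff.mpr (Or.inl rfl)⟩).symm
  have hjuniq : ∀ e ∈ M, j ∈ e → e = s(i,j) := by
    intro e he hje
    obtain ⟨e₀, -, hu⟩ := hcov j (Set.mem_univ j)
    exact (hu e ⟨he, hje⟩).trans (hu s(i,j) ⟨hij, Sym2.mem_iff.mpr (Or.inr rfl)⟩).symm
  -- side functions
  have hsideR' : ∀ u : ℕ, 1 ≤ u → u < m → lineF (v i) (v j) (v (i + (u : ZMod n))) < 0 := by
    intro u h1 h2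
    have := sideR hn hv i h1 h2 (by omega)
    rwa [hcast_m] at this
  have hsideL' : ∀ u : ℕ, m < u → u ≤ n - 1 → 0 < lineF (v i) (v j) (v (i + (u : ZMod n))) := by
    intro u h1 h2
    have := sideL hn hv i (t := m) (s := u) (by omega) h1 h2
    rwa [hcast_m] at this
  have hoff_i : (i - i).val = 0 := by rw [sub_self, ZMod.val_zero]
  -- Step A: every other pair lies entirely on one side
  have hcrossing : ∀ a b : ZMod n, s(a, b) ∈ M →
      1 ≤ (a - i).val → (a - i).val ≤ m - 1 →
      m + 1 ≤ (b - i).val → (b - i).val ≤ n - 1 → False := by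
    intro a b heM ha1 ha2 hb1 hb2
    set sa : ℕ := (a - i).val with hsa
    set sb : ℕ := (b - i).val with hsb
    have hca : i + (sa : ZMod n) = a := add_off i a
    have hcb : i + (sb : ZMod n) = b := add_off i b
    have hb_a : a + ((sb - sa : ℕ) : ZMod n) = b := by
      rw [← hca, ← hcb, Nat.cast_sub (by omega)]; ring
    have hj_a : a + ((m - sa : ℕ) : ZMod n) = j := by
      rw [← hca, ← hcast_m, Nat.cast_sub (by omega)]; ring
    have hi_a : a + ((n - sa : ℕ) : ZMod n) = i := by
      rw [← hca, Nat.cast_sub (by omega)]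
      have hzn : ((n : ℕ) : ZMod n) = 0 := ZMod.natCast_self n
      rw [hzn]; ring
    have h1 : lineF (v i) (v j) (v a) < 0 := by
      have := hsideR' sa ha1 (by omega); rwa [hca] at this
    have h2 : 0 < lineF (v i) (v j) (v b) := by
      have := hsideL' sb (by omega) hb2; rwa [hcb] at this
    have h3 : lineF (v a) (v b) (v j) < 0 := by
      have := sideR hn hv a (s := m - sa) (t := sb - sa) (by omega) (by omega) (by omega)
      rwa [hb_a, hj_a] at this
    have h4 : 0 < lineF (v a) (v b) (v i) := by
      have := sideL hn hv a (t := sb - sa) (s := n - sa) (by omega) (by omega) (by omega)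
      rwa [hb_a, hi_a] at this
    have hcross := seg_cross (v i) (v j) (v a) (v b) h1 h2 h4 h3
    apply hcross
    have hnee : s(a, b) ≠ s(i, j) := by
      intro hEq
      rw [Sym2.eq_iff] at hEq
      rcases hEq with ⟨rfl, rfl⟩ | ⟨rfl, rfl⟩
      · omega
      · omega
    have := hNC s(i,j) hij s(a,b) heM hnee.symm
    rw [pairSeg_mk, pairSeg_mk] at this
    exact this
  have hsplit : ∀ e ∈ M, e ≠ s(i,j) →
      (∀ k ∈ e, 1 ≤ (k - i).val ∧ (k - i).val ≤ m - 1) ∨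
      (∀ k ∈ e, m + 1 ≤ (k - i).val ∧ (k - i).val ≤ n - 1) := by
    intro e
    induction e using Sym2.ind with
    | _ a b =>
      intro he hne
      have hai : a ≠ i := by
        intro h; subst h; exact hne (hiuniq _ he (Sym2.mem_iff.mpr (Or.inl rfl)))
      have haj : a ≠ j := by
        intro h; subst h; exact hne (hjuniq _ he (Sym2.mem_iff.mpr (Or.inl rfl)))
      have hbi : b ≠ i := by
        intro h; subst h; exact hne (hiuniq _ he (Sym2.mem_iff.mpr (Or.inr rfl)))
      have hbj : b ≠ j := by
        intro h; subst h; exact hne (hjuniq _ he (Sym2.mem_iff.mpr (Or.inr rfl)))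
      have ha0 : (a - i).val ≠ 0 := by
        intro h; apply hai; rw [← add_off i a, h]; simp
      have ham : (a - i).val ≠ m := by
        intro h; apply haj; rw [← add_off i a, h, hcast_m]
      have hb0 : (b - i).val ≠ 0 := by
        intro h; apply hbi; rw [← add_off i b, h]; simp
      have hbm : (b - i).val ≠ m := by
        intro h; apply hbj; rw [← add_off i b, h, hcast_m]
      have haN : (a - i).val < n := ZMod.val_lt _
      have hbN : (b - i).val < n := ZMod.val_lt _
      by_cases hA : (a - i).val ≤ m - 1 <;> by_cases hB : (b - i).val ≤ m - 1
      · left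
        intro k hk
        rcases Sym2.mem_iff.mp hk with rfl | rfl
        · omega
        · omega
      · exact absurd (hcrossing a b he (by omega) hA (by omega) (by omega)) (fun h => h)
      · exfalso
        apply hcrossing b a (by rwa [Sym2.eq_swap]) (by omega) hB (by omega) (by omega)
      · right
        intro k hk
        rcases Sym2.mem_iff.mp hk with rfl | rfl
        · omega
        · omega
  -- Step B: parity forces m odd
  have hmodd : m % 2 = 1 := by
    have hev : Even ((Finset.Ico 1 m).image (fun u : ℕ => i + (u : ZMod n))).card := by
      apply even_of_partition
        (P := {e | e ∈ M ∧ ∀ k ∈ e, 1 ≤ (k - i).val ∧ (k - i).val ≤ m - 1})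
      · rintro e ⟨he, -⟩; exact hnd e he
      · rintro e ⟨he, hoffs⟩ k hk
        rw [Finset.mem_image]
        refine ⟨(k - i).val, ?_, add_off i k⟩
        rw [Finset.mem_Ico]
        have := hoffs k hk
        omega
      · intro k hk
        rw [Finset.mem_image] at hk
        obtain ⟨u, hu, rfl⟩ := hk
        rw [Finset.mem_Ico] at hu
        have hoffk : ((i + (u : ZMod n)) - i).val = u := off_add i (by omega)
        obtain ⟨e, ⟨heM, hke⟩, huq⟩ := hcov (i + (u : ZMod n)) (Set.mem_univ _)
        have hneij : e ≠ s(i,j) := by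
          intro hq
          rw [hq, Sym2.mem_iff] at hke
          rcases hke with h | h
          · have : ((i + (u : ZMod n)) - i).val = 0 := by rw [h, hoff_i]
            omega
          · have : ((i + (u : ZMod n)) - i).val = m := by rw [h]
            omega
        have hin : ∀ k' ∈ e, 1 ≤ (k' - i).val ∧ (k' - i).val ≤ m - 1 := by
          rcases hsplit e heM hneij with hL | hR
          · exact hL
          · exfalso
            have := hR _ hke
            rw [hoffk] at this
            omega
        exact ⟨e, ⟨⟨heM, hin⟩, hke⟩, by
          rintro e' ⟨⟨he', -⟩, hke'⟩
          exact huq e' ⟨he', hke'⟩⟩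
    rw [Finset.card_image_of_injOn, Nat.card_Ico] at hev
    · obtain ⟨r, hr⟩ := hev; omega
    · intro u hu w hw h
      simp only [Finset.coe_Ico, Set.mem_Ico] at hu hw
      exact zmod_cast_inj (by omega) (by omega) (add_left_cancel h)
  -- Step C: edge lengths along the arc are at most the diagonal
  set E : ℕ → Pt := fun u => v (i + ((u+1 : ℕ) : ZMod n)) - v (i + (u : ZMod n)) with hE
  have hvne : ∀ k : ZMod n, v (k + 1) ≠ v k := by
    intro k h
    have h2ne : k + ((2:ℕ) : ZMod n) ≠ k := zmod_add_ne_self k (by omega) (by omega)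
    have h2ne1 : k + ((2:ℕ) : ZMod n) ≠ k + 1 := by
      have := zmod_add_ne k (show (2:ℕ) < n by omega) (show 1 < n by omega) (by omega)
      rwa [Nat.cast_one] at this
    have hpos := hv k (k + ((2:ℕ) : ZMod n)) h2ne h2ne1
    rw [h] at hpos
    simp [cross] at hpos
  have hEne : ∀ u : ℕ, E u ≠ 0 := by
    intro u h
    apply hvne (i + (u : ZMod n))
    have hidx : i + ((u+1 : ℕ) : ZMod n) = i + (u : ZMod n) + 1 := by push_cast; ring
    have h' : v (i + ((u+1 : ℕ) : ZMod n)) - v (i + (u : ZMod n)) = 0 := h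
    rw [hidx] at h'
    exact sub_eq_zero.mp h'
  have htau_sum : tau v i j
      = ∑ u ∈ Finset.range (m-1), angle (E (u+1)) (E u) := by
    rw [tau]
    have hji : j - i = (m : ZMod n) := by rw [← hcast_m]; ring
    have harc : (j - 1) - (i + 1) = ((m - 2 : ℕ) : ZMod n) := by
      rw [Nat.cast_sub hm2]
      rw [show (j - 1) - (i + 1) = (j - i) - 2 from by ring, hji]
      norm_num
    rw [arc, harc, ZMod.val_natCast_of_lt (by omega), show (m-2)+1 = m-1 by omega]
    rw [Finset.sum_image (by
      intro u hu w hw h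
      rw [Finset.mem_coe, Finset.mem_range] at hu hw
      exact zmod_cast_inj (by omega) (by omega) (add_left_cancel h))]
    apply Finset.sum_congr rfl
    intro t ht
    rw [Finset.mem_range] at ht
    have e1 : (i + 1 + (t : ZMod n)) + 1 = i + ((t+2 : ℕ) : ZMod n) := by push_cast; ring
    have e2 : i + 1 + (t : ZMod n) = i + ((t+1 : ℕ) : ZMod n) := by push_cast; ring
    have e3 : (i + 1 + (t : ZMod n)) - 1 = i + ((t : ℕ) : ZMod n) := by push_cast; ring
    rw [e1, e3]
    rw [show i + 1 + (t : ZMod n) = i + ((t+1 : ℕ) : ZMod n) from e2]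
  have hangle : ∀ u w : ℕ, u ≤ m - 1 → w ≤ m - 1 → angle (E u) (E w) ≤ Real.pi / 2 := by
    have hchain : ∀ w u : ℕ, u ≤ w → w ≤ m - 1 →
        angle (E u) (E w) ≤ ∑ t ∈ Finset.Ico u w, angle (E (t+1)) (E t) := by
      intro w
      induction w with
      | zero =>
        intro u hu _
        interval_cases u
        rw [angle_self (hEne 0)]
        simp
      | succ w ih =>
        intro u hu hwm
        rcases Nat.eq_or_lt_of_le hu with rfl | hlt
        · rw [angle_self (hEne _)]
          exact Finset.sum_nonneg fun t _ => angle_nonneg _ _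
        · have hu' : u ≤ w := by omega
          calc angle (E u) (E (w+1))
              ≤ angle (E u) (E w) + angle (E w) (E (w+1)) := angle_triangle _ _ _
            _ ≤ (∑ t ∈ Finset.Ico u w, angle (E (t+1)) (E t)) + angle (E w) (E (w+1)) := by
                have := ih u hu' (by omega)
                linarith
            _ = ∑ t ∈ Finset.Ico u (w+1), angle (E (t+1)) (E t) := by
                rw [Finset.sum_Ico_succ_top hu', angle_comm (E w) (E (w+1))]
    have hbnd : ∀ u w : ℕ, u ≤ w → w ≤ m - 1 → angle (E u) (E w) ≤ Real.pi / 2 := by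
      intro u w h hw
      calc angle (E u) (E w) ≤ ∑ t ∈ Finset.Ico u w, angle (E (t+1)) (E t) :=
            hchain w u h hw
        _ ≤ ∑ t ∈ Finset.range (m-1), angle (E (t+1)) (E t) := by
            apply Finset.sum_le_sum_of_subset_of_nonneg
            · intro t ht
              rw [Finset.mem_Ico] at ht
              rw [Finset.mem_range]
              omega
            · exact fun t _ _ => angle_nonneg _ _
        _ = tau v i j := htau_sum.symm
        _ ≤ Real.pi / 2 := htau
    intro u w hu hw
    rcases le_total u w with h | h
    · exact hbnd u w h hw
    · rw [angle_comm]; exact hbnd w u h hu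
  have hinner : ∀ u w : ℕ, u ≤ m - 1 → w ≤ m - 1 → 0 ≤ (inner ℝ (E u) (E w) : ℝ) :=
    fun u w hu hw => inner_nonneg_of_angle_le_pi_div_two (hangle u w hu hw)
  have htel : v j - v i = ∑ u ∈ Finset.range m, E u := by
    have hstep : ∀ mm : ℕ, v (i + (mm : ZMod n)) - v i = ∑ u ∈ Finset.range mm, E u := by
      intro mm
      induction mm with
      | zero => simp
      | succ w ih =>
        rw [Finset.sum_range_succ, ← ih]
        simp only [hE]
        abel
    rw [← hcast_m]
    exact hstep m
  have hlen : ∀ u : ℕ, u ≤ m - 1 → ‖E u‖ ≤ ‖v j - v i‖ := by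
    intro u hu
    rcases eq_or_ne (E u) 0 with h | h
    · rw [h, norm_zero]; positivity
    have hEu : 0 < ‖E u‖ := norm_pos_iff.mpr h
    have hsum : (‖E u‖ : ℝ)^2 ≤ (inner ℝ (v j - v i) (E u) : ℝ) := by
      rw [htel, sum_inner]
      calc (‖E u‖ : ℝ)^2 = (inner ℝ (E u) (E u) : ℝ) := (real_inner_self_eq_norm_sq _).symm
        _ ≤ ∑ w ∈ Finset.range m, (inner ℝ (E w) (E u) : ℝ) := by
            apply Finset.single_le_sum (f := fun w => (inner ℝ (E w) (E u) : ℝ))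
            · intro w hw
              rw [Finset.mem_range] at hw
              exact hinner w u (by omega) hu
            · rw [Finset.mem_range]; omega
    have hcs : (inner ℝ (v j - v i) (E u) : ℝ) ≤ ‖v j - v i‖ * ‖E u‖ := real_inner_le_norm _ _
    nlinarith
  -- Step D: the surgery
  set MOut : Set (Sym2 (ZMod n)) := {e | e ∈ M ∧ ∀ k ∈ e, m + 1 ≤ (k - i).val} with hMOutDef
  set M' : Set (Sym2 (ZMod n)) := consecPairs i m ∪ MOut with hM'Def
  have hmn1' : m ≤ n - 1 := by omega
  -- matching property
  have hmatch' : IsMatchingOn Set.univ M' := by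
    refine ⟨?_, fun e _ k _ => Set.mem_univ k, ?_⟩
    · rintro e (he | he)
      · exact consec_notdiag hmn1' e he
      · exact hnd e he.1
    · intro k _
      by_cases hk : (k - i).val ≤ m
      · obtain ⟨e, he, hu⟩ := consec_cover hmn1' hmodd hk
        refine ⟨e, ⟨Or.inl he.1, he.2⟩, ?_⟩
        rintro e' ⟨(h | h), hke'⟩
        · exact hu e' ⟨h, hke'⟩
        · exfalso
          have := h.2 k hke'
          omega
      · obtain ⟨e, ⟨heM, hke⟩, hu⟩ := hcov k (Set.mem_univ k)
        have hneij : e ≠ s(i,j) := by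
          intro hq
          rw [hq, Sym2.mem_iff] at hke
          rcases hke with rfl | rfl
          · rw [hoff_i] at hk; omega
          · rw [← hmdef] at hk; omega
        have heOut : e ∈ MOut := by
          refine ⟨heM, ?_⟩
          rcases hsplit e heM hneij with hL | hR
          · exfalso
            have := hL k hke
            omega
          · exact fun k' hk' => (hR k' hk').1
        refine ⟨e, ⟨Or.inr heOut, hke⟩, ?_⟩
        rintro e' ⟨(h | h), hke'⟩
        · exfalso
          have := consec_mem_off hmn1' e' h k hke'
          omega
        · exact hu e' ⟨h.1, hke'⟩
  -- non-crossing
  have hend : ∀ w : ℕ, w ≤ m → lineF (v i) (v j) (v (i + (w : ZMod n))) ≤ 0 := by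
    intro w hwm
    rcases Nat.eq_zero_or_pos w with rfl | hw0
    · simp only [Nat.cast_zero, add_zero]
      exact le_of_eq (lineF_self _ _)
    rcases eq_or_lt_of_le hwm with rfl | hwlt
    · rw [hcast_m]
      exact le_of_eq (lineF_target _ _)
    · exact le_of_lt (hsideR' w hw0 hwlt)
  have hout_pos : ∀ k : ZMod n, m + 1 ≤ (k - i).val → 0 < lineF (v i) (v j) (v k) := by
    intro k hk
    have hkn : (k - i).val < n := ZMod.val_lt _
    have := hsideL' (k - i).val (by omega) (by omega)
    rwa [add_off i k] at this
  have hdisjCO : ∀ e ∈ consecPairs i m, ∀ e' ∈ MOut,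
      Disjoint (pairSeg v e) (pairSeg v e') := by
    rintro e ⟨t, ht, rfl⟩ e' he'
    induction e' using Sym2.ind with
    | _ c d =>
      rw [pairSeg_mk, pairSeg_mk]
      refine seg_disj (v i) (v j) _ _ _ _ (hend (2*t) (by omega)) (hend (2*t+1) ht) ?_ ?_
      · exact hout_pos c (he'.2 c (Sym2.mem_iff.mpr (Or.inl rfl)))
      · exact hout_pos d (he'.2 d (Sym2.mem_iff.mpr (Or.inr rfl)))
  have hNC' : NonCrossing v M' := by
    rintro e (he | he) e' (he' | he') hne
    · exact consec_disj hn hv hmn1' e he e' he' hne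
    · exact hdisjCO e he e' he'
    · exact (hdisjCO e' he' e he).symm
    · exact hNC e he.1 e' he'.1 hne
  -- bottleneck value does not increase
  have hbn0 : (0:ℝ) ≤ bnM v M := by
    have h0 : (0:ℝ) ≤ pairDist v s(i,j) := by rw [pairDist_mk]; exact dist_nonneg
    exact le_trans h0 (bnM_ge hij)
  have hbn' : bnM v M' ≤ bnM v M := by
    apply bnM_le hbn0
    rintro e (he | he)
    · obtain ⟨t, ht, rfl⟩ := he
      rw [pairDist_mk]
      have h1 : dist (v (i + ((2*t : ℕ) : ZMod n))) (v (i + ((2*t+1 : ℕ) : ZMod n)))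
          = ‖E (2*t)‖ := by
        rw [dist_eq_norm]
        simp only [hE]
        rw [norm_sub_rev]
      rw [h1]
      calc ‖E (2*t)‖ ≤ ‖v j - v i‖ := hlen (2*t) (by omega)
        _ = dist (v j) (v i) := (dist_eq_norm _ _).symm
        _ = dist (v i) (v j) := dist_comm _ _
        _ = pairDist v s(i,j) := (pairDist_mk v i j).symm
        _ ≤ bnM v M := bnM_ge hij
    · exact bnM_ge he.1
  have hM'NC : IsNCMatching v M' := ⟨hmatch', hNC'⟩
  have hEqbn : bnM v M' = bnM v M := le_antisymm hbn' (hminb M' hM'NC)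
  have hbot' : IsBottleneck v M' := by
    refine ⟨hM'NC, fun M'' h'' => ?_⟩
    rw [hEqbn]
    exact hminb M'' h''
  -- fewer diagonals: contradiction with minimality
  have hsub : fullDiags M' ⊆ fullDiags M \ {s(i,j)} := by
    rintro e ⟨he, hpe⟩
    rcases he with h | h
    · exfalso
      obtain ⟨t, ht, rfl⟩ := h
      apply hpe
      refine ⟨i + ((2*t : ℕ) : ZMod n), ?_⟩
      rw [show i + ((2*t+1 : ℕ) : ZMod n) = i + ((2*t : ℕ) : ZMod n) + 1 from by push_cast; ring]
    · refine ⟨⟨h.1, hpe⟩, ?_⟩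
      intro hcon
      rw [Set.mem_singleton_iff] at hcon
      subst hcon
      have := h.2 i (Sym2.mem_iff.mpr (Or.inl rfl))
      rw [hoff_i] at this
      omega
  have hlt : (fullDiags M').ncard < (fullDiags M).ncard := by
    apply Set.ncard_lt_ncard ?_ (Set.toFinite _)
    refine ⟨hsub.trans Set.diff_subset, fun hcon => ?_⟩
    exact (hsub (hcon ⟨hij, hdg⟩)).2 rfl
  exact absurd (hmind M' hbot') (by omega)

end Key

end BNC
/-- There is a bottleneck non-crossing matching `M` such that every diagonal
`{i,j} ∈ M` has turning angle exceeding `π/2` in both orientations. -/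
theorem stmt0 (n : ℕ) [NeZero n] (hn : 4 ≤ n) (hEven : Even n)
    (v : ZMod n → BNC.Pt) (hv : BNC.ConvexCCW v) :
    ∃ M : Set (Sym2 (ZMod n)), BNC.IsBottleneck v M ∧
      ∀ i j : ZMod n, s(i, j) ∈ M → ¬ BNC.IsPolyEdge s(i, j) →
        Real.pi / 2 < BNC.tau v i j ∧ Real.pi / 2 < BNC.tau v j i := by
  classical
  have hodd : (n-1) % 2 = 1 := by
    obtain ⟨r, hr⟩ := hEven; omega
  have hM0 : BNC.IsNCMatching v (BNC.consecPairs (0 : ZMod n) (n-1)) := by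
    refine ⟨⟨BNC.consec_notdiag (le_refl (n-1)), fun e _ k _ => Set.mem_univ k, ?_⟩,
      BNC.consec_disj hn hv (le_refl (n-1))⟩
    intro k _
    apply BNC.consec_cover (le_refl (n-1)) hodd
    have := ZMod.val_lt (k - 0)
    omega
  obtain ⟨M₁, hM₁S, hM₁min⟩ := Set.exists_min_image {M | BNC.IsNCMatching v M} (BNC.bnM v)
    (Set.toFinite _) ⟨_, hM0⟩
  have hM₁b : BNC.IsBottleneck v M₁ := ⟨hM₁S, fun M' h' => hM₁min M' h'⟩
  have hTne : ((fun M => (BNC.fullDiags M).ncard) '' {M | BNC.IsBottleneck v M}).Nonempty :=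
    ⟨_, ⟨M₁, hM₁b, rfl⟩⟩
  obtain ⟨M₂, hM₂b, hc⟩ := Nat.sInf_mem hTne
  have hmind : ∀ M', BNC.IsBottleneck v M' →
      (BNC.fullDiags M₂).ncard ≤ (BNC.fullDiags M').ncard := by
    intro M' h'
    simp only at hc
    rw [hc]
    exact Nat.sInf_le ⟨M', h', rfl⟩
  refine ⟨M₂, hM₂b, ?_⟩
  intro i j hij hdg
  constructor
  · exact BNC.key_lemma hn v hv hM₂b.1 hM₂b.2 hmind hij hdg
  · have hij' : s(j, i) ∈ M₂ := by rwa [Sym2.eq_swap]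
    have hdg' : ¬ BNC.IsPolyEdge s(j, i) := by rwa [Sym2.eq_swap]
    exact BNC.key_lemma hn v hv hM₂b.1 hM₂b.2 hmind hij' hdg'
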